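/- Let 0 < λ < 1 be real and let d ≥ 1 be an integer. Then there exists a constant C > 0 (depending only on λ and d) such that the following holds: for every real ε ≥ 0 and every sequence u : ℕ → ℝ satisfying u(0) = 1, 0 ≤ u(i) ≤ λ^i for every i ≥ 0, and |u(i+1) − λ·u(i)^d| ≤ ε for every i ≥ 0, one has |u(i) − λ^{(1 + d + d² + ⋯ + d^{i−1})}| ≤ C·ε for every i ≥ 0, where the exponent 1 + d + ⋯ + d^{i−1} denotes Σ_{j=0}^{i−1} d^j (and equals 0 when i = 0). -/

import Mathlib

lemma abs_pow_sub_pow_le_aux {x y M : ℝ} (hx0 : 0 ≤ x) (hxM : x ≤ M)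
    (hy0 : 0 ≤ y) (hyM : y ≤ M) (d : ℕ) :
    |x ^ d - y ^ d| ≤ (d : ℝ) * M ^ (d - 1) * |x - y| := by
  have hM0 : 0 ≤ M := le_trans hx0 hxM
  have h := geom_sum₂_mul x y d
  rw [← h, abs_mul]
  gcongr
  calc |∑ i ∈ Finset.range d, x ^ i * y ^ (d - 1 - i)|
      ≤ ∑ i ∈ Finset.range d, |x ^ i * y ^ (d - 1 - i)| := Finset.abs_sum_le_sum_abs _ _
    _ ≤ ∑ i ∈ Finset.range d, M ^ (d - 1) := by
        apply Finset.sum_le_sum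
        intro k hk
        rw [Finset.mem_range] at hk
        have hk' : k ≤ d - 1 := Nat.le_sub_one_of_lt hk
        have : x ^ k * y ^ (d - 1 - k) ≤ M ^ k * M ^ (d - 1 - k) := by
          apply mul_le_mul (pow_le_pow_left₀ hx0 hxM k) (pow_le_pow_left₀ hy0 hyM _)
            (by positivity) (by positivity)
        rw [abs_of_nonneg (by positivity), ← pow_add] at *
        rwa [Nat.add_sub_cancel' hk'] at this
    _ = (d : ℝ) * M ^ (d - 1) := by
        rw [Finset.sum_const, Finset.card_range, nsmul_eq_mul]

theorem balance_recursion_stability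
    (lam : ℝ) (hlam0 : 0 < lam) (hlam1 : lam < 1) (d : ℕ) (hd : 1 ≤ d) :
    ∃ C > (0 : ℝ), ∀ ε : ℝ, 0 ≤ ε → ∀ u : ℕ → ℝ, u 0 = 1 →
      (∀ i, 0 ≤ u i ∧ u i ≤ lam ^ i) →
      (∀ i, |u (i + 1) - lam * (u i) ^ d| ≤ ε) →
      ∀ i, |u i - lam ^ (∑ j ∈ Finset.range i, d ^ j)| ≤ C * ε := by
  set q : ℝ := max lam (1/2) with hqdef
  have hq0 : 0 < q := lt_max_of_lt_right (by norm_num)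
  have hq1 : q < 1 := max_lt hlam1 (by norm_num)
  have h1q : 0 < 1 - q := by linarith
  have hlamle1 : lam ≤ 1 := le_of_lt hlam1
  have hexN : ∃ N : ℕ, ∀ i, N ≤ i → (d : ℝ) * lam ^ (i * (d - 1) + 1) ≤ q := by
    rcases eq_or_lt_of_le hd with h1 | h2
    · refine ⟨0, fun i _ => ?_⟩
      rw [← h1]
      simp only [Nat.cast_one, one_mul, Nat.sub_self, Nat.mul_zero, Nat.zero_add, pow_one]
      exact le_max_left _ _
    · obtain ⟨N, hNlt⟩ := exists_pow_lt_of_lt_one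
        (show (0:ℝ) < 1/(2*d) by positivity) hlam1
      refine ⟨N, fun i hi => ?_⟩
      have hNi : N ≤ i * (d - 1) + 1 := by
        have h1 : 1 ≤ d - 1 := by omega
        calc N ≤ i := hi
          _ ≤ i * (d - 1) := Nat.le_mul_of_pos_right i (by omega)
          _ ≤ i * (d - 1) + 1 := Nat.le_succ _
      have hle : lam ^ (i * (d - 1) + 1) ≤ lam ^ N :=
        pow_le_pow_of_le_one (le_of_lt hlam0) hlamle1 hNi
      have hd0 : (0:ℝ) < d := by positivity
      calc (d : ℝ) * lam ^ (i * (d - 1) + 1) ≤ (d : ℝ) * lam ^ N := by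
            gcongr
        _ ≤ (d : ℝ) * (1/(2*d)) := by gcongr
        _ = 1/2 := by field_simp
        _ ≤ q := le_max_right _ _
  obtain ⟨N, hN⟩ := hexN
  refine ⟨1/(1-q) + ((d:ℝ)+1)^N, by positivity, ?_⟩
  intro ε hε u hu0 hub hrec
  set S : ℕ → ℕ := fun i => ∑ j ∈ Finset.range i, d ^ j with hSdef
  set e : ℕ → ℝ := fun i => |u i - lam ^ (S i)| with hedef
  have he0 : e 0 = 0 := by simp [hedef, hSdef, hu0]
  have heNN : ∀ i, 0 ≤ e i := fun i => abs_nonneg _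
  have hvle : ∀ i, lam ^ (S i) ≤ lam ^ i := by
    intro i
    apply pow_le_pow_of_le_one (le_of_lt hlam0) hlamle1
    calc i = ∑ _j ∈ Finset.range i, 1 := by simp
      _ ≤ S i := Finset.sum_le_sum (fun j _ => Nat.one_le_pow _ _ (by omega))
  have key : ∀ i, e (i + 1) ≤ ε + (d : ℝ) * lam ^ (i * (d - 1) + 1) * e i := by
    intro i
    have hS1 : S (i + 1) = d * S i + 1 := by
      simp only [hSdef]
      rw [geom_sum_succ]
    have hsplit : u (i+1) - lam ^ (S (i+1))
        = (u (i+1) - lam * (u i) ^ d) + lam * ((u i) ^ d - (lam ^ (S i)) ^ d) := by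
      rw [hS1, pow_succ, pow_mul]
      ring
    have habs := abs_pow_sub_pow_le_aux (hub i).1 (hub i).2
      (pow_nonneg (le_of_lt hlam0) _) (hvle i) d
    calc e (i+1) = |(u (i+1) - lam * (u i) ^ d) + lam * ((u i) ^ d - (lam ^ (S i)) ^ d)| := by
          rw [hedef]; simp only; rw [hsplit]
      _ ≤ |u (i+1) - lam * (u i) ^ d| + |lam * ((u i) ^ d - (lam ^ (S i)) ^ d)| := abs_add_le _ _
      _ ≤ ε + lam * ((d : ℝ) * (lam ^ i) ^ (d - 1) * e i) := by
          refine add_le_add (hrec i) ?_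
          rw [abs_mul, abs_of_pos hlam0]
          exact mul_le_mul_of_nonneg_left habs (le_of_lt hlam0)
      _ = ε + (d : ℝ) * lam ^ (i * (d - 1) + 1) * e i := by
          rw [← pow_mul, pow_add, pow_one]
          ring
  have keyd : ∀ i, e (i + 1) ≤ ε + (d : ℝ) * e i := by
    intro i
    refine le_trans (key i) ?_
    have hp : lam ^ (i * (d - 1) + 1) ≤ 1 := pow_le_one₀ (le_of_lt hlam0) hlamle1
    have hdd : (d : ℝ) * lam ^ (i * (d - 1) + 1) ≤ (d : ℝ) :=
      mul_le_of_le_one_right (Nat.cast_nonneg d) hp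
    have := mul_le_mul_of_nonneg_right hdd (heNN i)
    linarith
  have bound1 : ∀ i, e i ≤ (((d:ℝ)+1)^i - 1) * ε := by
    intro i
    induction i with
    | zero => simp [he0]
    | succ n ih =>
      have hd1 : (1:ℝ) ≤ (d:ℝ) := by exact_mod_cast hd
      have hp1 : (1:ℝ) ≤ ((d:ℝ)+1)^n := one_le_pow₀ (by linarith)
      calc e (n+1) ≤ ε + (d:ℝ) * e n := keyd n
        _ ≤ ε + (d:ℝ) * ((((d:ℝ)+1)^n - 1) * ε) := by
            nlinarith [mul_nonneg (show (0:ℝ) ≤ (d:ℝ) by positivity) (sub_nonneg.mpr ih)]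
        _ ≤ (((d:ℝ)+1)^(n+1) - 1) * ε := by
            rw [pow_succ]
            nlinarith
  have bound2 : ∀ k, e (N + k) ≤ ε / (1 - q) + e N := by
    intro k
    induction k with
    | zero => simp; positivity
    | succ n ih =>
      have ha := hN (N + n) (Nat.le_add_right _ _)
      have hstep := key (N + n)
      have h1 : (d : ℝ) * lam ^ ((N+n) * (d - 1) + 1) * e (N+n) ≤ q * e (N+n) :=
        mul_le_mul_of_nonneg_right ha (heNN _)
      have h2 : q * e (N + n) ≤ q * (ε / (1 - q) + e N) := by
        nlinarith [mul_nonneg (le_of_lt hq0) (sub_nonneg.mpr ih)]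
      have hεeq : ε = (ε / (1 - q)) * (1 - q) := by field_simp
      have hqeN : q * e N ≤ e N := by
        nlinarith [heNN N]
      have : e (N + n + 1) ≤ ε + q * (ε / (1 - q) + e N) := by
        calc e (N + n + 1) ≤ ε + (d : ℝ) * lam ^ ((N+n) * (d - 1) + 1) * e (N+n) := hstep
          _ ≤ ε + q * (ε / (1 - q) + e N) := by linarith
      have hfin : ε + q * (ε / (1 - q) + e N) ≤ ε / (1 - q) + e N := by
        nlinarith [heNN N]
      have hrw : N + (n + 1) = N + n + 1 := by omega
      rw [hrw]
      linarith
  intro i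
  show e i ≤ _
  have hd1 : (1:ℝ) ≤ (d:ℝ) := by exact_mod_cast hd
  have hpN : (1:ℝ) ≤ ((d:ℝ)+1)^N := one_le_pow₀ (by linarith)
  have hinv : 0 < 1 / (1 - q) := by positivity
  rcases le_or_gt i N with hiN | hiN
  · have h1 := bound1 i
    have h2 : ((d:ℝ)+1)^i ≤ ((d:ℝ)+1)^N := pow_le_pow_right₀ (by linarith) hiN
    nlinarith
  · obtain ⟨k, rfl⟩ : ∃ k, i = N + k := ⟨i - N, by omega⟩
    have h1 := bound2 k
    have h2 := bound1 N
    have : ε / (1 - q) = (1 / (1 - q)) * ε := by ring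
    nlinarith
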